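/- Let S be a finite set, let c : S → ℕ with C := ∑_{s∈S} c_s > 0, and let p : S → ℝ satisfy p_s ≥ 0 for all s and ∑_{s∈S} p_s ≤ 1. Then ∏_{s∈S} p_s^{c_s} = ∏_{s∈S} (c_s/C)^{c_s} (with 0^0 = 1) if and only if p_s = c_s/C for every s ∈ S. -/

import Mathlib

/-- The product `∏ s, p s ^ c s` (with `0 ^ 0 = 1`) over a
sub-probability vector `p` equals the maximum value `∏ s, (c s / C) ^ c s`
(where `C = ∑ s, c s > 0`) if and only if `p s = c s / C` for every `s ∈ S`. -/
theorem likelihood_eq_empirical_iff {α : Type*} (S : Finset α) (c : α → ℕ) (p : α → ℝ)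
    (hC : 0 < ∑ s ∈ S, c s)
    (hp : ∀ s ∈ S, 0 ≤ p s)
    (hsum : ∑ s ∈ S, p s ≤ 1) :
    (∏ s ∈ S, p s ^ c s = ∏ s ∈ S, ((c s : ℝ) / ((∑ t ∈ S, c t : ℕ) : ℝ)) ^ c s) ↔
      ∀ s ∈ S, p s = (c s : ℝ) / ((∑ t ∈ S, c t : ℕ) : ℝ) := by
  classical
  set C : ℝ := ((∑ t ∈ S, c t : ℕ) : ℝ) with hCdef
  have hCpos : (0:ℝ) < C := by rw [hCdef]; exact_mod_cast hC
  set q : α → ℝ := fun s => (c s : ℝ) / C with hqdef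
  constructor
  · intro h
    set T := S.filter (fun s => c s ≠ 0) with hT
    have hTsub : T ⊆ S := Finset.filter_subset _ _
    have hcpos : ∀ s ∈ T, (0:ℝ) < (c s : ℝ) := by
      intro s hs
      have : c s ≠ 0 := (Finset.mem_filter.mp hs).2
      exact_mod_cast Nat.pos_of_ne_zero this
    have hprod_eqS : ∀ f : α → ℝ, ∏ s ∈ S, f s ^ c s = ∏ s ∈ T, f s ^ c s := by
      intro f
      rw [hT, Finset.prod_filter]
      refine (Finset.prod_congr rfl ?_)
      intro s _
      by_cases hcs : c s = 0 <;> simp [hcs]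
    have hqpos : ∀ s ∈ T, 0 < q s := fun s hs => div_pos (hcpos s hs) hCpos
    have hRpos : 0 < ∏ s ∈ T, q s ^ c s :=
      Finset.prod_pos fun s hs => pow_pos (hqpos s hs) _
    have hP : ∏ s ∈ T, p s ^ c s = ∏ s ∈ T, q s ^ c s := by
      rw [← hprod_eqS p, ← hprod_eqS q]; exact h
    have hPpos : 0 < ∏ s ∈ T, p s ^ c s := hP ▸ hRpos
    have hppos : ∀ s ∈ T, 0 < p s := by
      intro s hs
      rcases (hp s (hTsub hs)).lt_or_eq with h' | h'
      · exact h'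
      · exfalso
        have hzero : p s ^ c s = 0 := by
          rw [← h', zero_pow (Finset.mem_filter.mp hs).2]
        have := Finset.prod_eq_zero (f := fun s => p s ^ c s) hs hzero
        rw [this] at hPpos
        exact lt_irrefl _ hPpos
    -- sum of counts over T equals C
    have hsumT : ∑ s ∈ T, (c s : ℝ) = C := by
      rw [hCdef]
      push_cast
      refine Finset.sum_subset hTsub ?_
      intro s hsS hsT
      have : c s = 0 := by
        by_contra hne
        exact hsT (Finset.mem_filter.mpr ⟨hsS, hne⟩)
      simp [this]
    -- log equality
    have hlog : ∑ s ∈ T, (c s : ℝ) * Real.log (p s)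
        = ∑ s ∈ T, (c s : ℝ) * Real.log (q s) := by
      have h1 : Real.log (∏ s ∈ T, p s ^ c s) = ∑ s ∈ T, (c s : ℝ) * Real.log (p s) := by
        rw [Real.log_prod (fun s hs => pow_ne_zero _ (hppos s hs).ne')]
        exact Finset.sum_congr rfl fun s hs => Real.log_pow _ _
      have h2 : Real.log (∏ s ∈ T, q s ^ c s) = ∑ s ∈ T, (c s : ℝ) * Real.log (q s) := by
        rw [Real.log_prod (fun s hs => pow_ne_zero _ (hqpos s hs).ne')]
        exact Finset.sum_congr rfl fun s hs => Real.log_pow _ _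
      rw [← h1, ← h2, hP]
    -- per-term inequality
    have key : ∀ s ∈ T,
        (c s : ℝ) * Real.log (p s) - (c s : ℝ) * Real.log (q s) ≤ C * p s - (c s : ℝ) := by
      intro s hs
      have hps := hppos s hs
      have hqs := hqpos s hs
      have hlog_le : Real.log (p s / q s) ≤ p s / q s - 1 :=
        Real.log_le_sub_one_of_pos (div_pos hps hqs)
      have hld : Real.log (p s / q s) = Real.log (p s) - Real.log (q s) :=
        Real.log_div hps.ne' hqs.ne'
      have hcq : (c s : ℝ) * (p s / q s) = C * p s := by
        have hc := hcpos s hs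
        rw [hqdef]
        field_simp
      have := mul_le_mul_of_nonneg_left hlog_le (hcpos s hs).le
      rw [hld] at this
      nlinarith [this, hcq]
    -- strict version
    have keystrict : ∀ s ∈ T, p s ≠ q s →
        (c s : ℝ) * Real.log (p s) - (c s : ℝ) * Real.log (q s) < C * p s - (c s : ℝ) := by
      intro s hs hne
      have hps := hppos s hs
      have hqs := hqpos s hs
      have hne' : p s / q s ≠ 1 := by
        intro hone
        exact hne (by field_simp at hone; linarith)
      have hlog_lt : Real.log (p s / q s) < p s / q s - 1 :=
        Real.log_lt_sub_one_of_pos (div_pos hps hqs) hne'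
      have hld : Real.log (p s / q s) = Real.log (p s) - Real.log (q s) :=
        Real.log_div hps.ne' hqs.ne'
      have hcq : (c s : ℝ) * (p s / q s) = C * p s := by
        have hc := hcpos s hs
        rw [hqdef]
        field_simp
      have := mul_lt_mul_of_pos_left hlog_lt (hcpos s hs)
      rw [hld] at this
      nlinarith [this, hcq]
    -- sum of RHS ≤ 0
    have hsum_rhs : ∑ s ∈ T, (C * p s - (c s : ℝ)) ≤ 0 := by
      have hTle : ∑ s ∈ T, p s ≤ 1 := by
        refine le_trans ?_ hsum
        exact Finset.sum_le_sum_of_subset_of_nonneg hTsub fun s hsS _ => hp s hsS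
      have : ∑ s ∈ T, (C * p s - (c s : ℝ)) = C * (∑ s ∈ T, p s) - C := by
        rw [Finset.sum_sub_distrib, hsumT, Finset.mul_sum]
      rw [this]
      nlinarith
    -- equality on T
    have hT_eq : ∀ s ∈ T, p s = q s := by
      by_contra hcon
      push_neg at hcon
      obtain ⟨s₀, hs₀, hne₀⟩ := hcon
      have hlt : ∑ s ∈ T, ((c s : ℝ) * Real.log (p s) - (c s : ℝ) * Real.log (q s))
          < ∑ s ∈ T, (C * p s - (c s : ℝ)) :=
        Finset.sum_lt_sum key ⟨s₀, hs₀, keystrict s₀ hs₀ hne₀⟩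
      have hzero : ∑ s ∈ T, ((c s : ℝ) * Real.log (p s) - (c s : ℝ) * Real.log (q s)) = 0 := by
        rw [Finset.sum_sub_distrib, hlog]; ring
      rw [hzero] at hlt
      linarith
    -- sum over T equals 1
    have hsumTp : ∑ s ∈ T, p s = 1 := by
      have : ∑ s ∈ T, p s = ∑ s ∈ T, q s := Finset.sum_congr rfl hT_eq
      rw [this, hqdef]
      rw [← Finset.sum_div, hsumT, div_self hCpos.ne']
    -- zeros outside T
    have hzeros : ∀ s ∈ S \ T, p s = 0 := by
      have hsplit : ∑ s ∈ S \ T, p s + ∑ s ∈ T, p s = ∑ s ∈ S, p s :=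
        Finset.sum_sdiff hTsub
      have hle0 : ∑ s ∈ S \ T, p s ≤ 0 := by
        rw [hsumTp] at hsplit; linarith
      have hge : ∀ s ∈ S \ T, 0 ≤ p s := fun s hs => hp s (Finset.mem_sdiff.mp hs).1
      intro s hs
      have heq0 : ∑ s ∈ S \ T, p s = 0 := le_antisymm hle0 (Finset.sum_nonneg hge)
      exact (Finset.sum_eq_zero_iff_of_nonneg hge).mp heq0 s hs
    intro s hsS
    by_cases hcs : c s = 0
    · have hsT : s ∉ T := fun hmem => (Finset.mem_filter.mp hmem).2 hcs
      have : p s = 0 := hzeros s (Finset.mem_sdiff.mpr ⟨hsS, hsT⟩)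
      rw [this, hcs]; simp
    · exact hT_eq s (Finset.mem_filter.mpr ⟨hsS, hcs⟩)
  · intro h
    exact Finset.prod_congr rfl fun s hs => by rw [h s hs]
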